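/- Let R ⊂ S be a module-finite flat ring extension of commutative rings. Then for each prime ideal P in Supp_R(S/R), the conductor satisfies (R:S)_P = 0, i.e., the conductor localizes to zero at every prime of the support. -/

import Mathlib

open TensorProduct

universe uA uB

/-- Two-term equational criterion consequence, universe-polymorphic. -/
theorem flat_two_term_relation {A : Type uA} {B : Type uB} [CommRing A] [AddCommGroup B]
    [Module A B] [Module.Flat A B] (x a : A) (b c : B) (h : x • b = a • c) :
    ∃ (ι : Type (max uA uB)) (_ : Fintype ι) (u v : ι → A) (y : ι → B),
      c = ∑ i, u i • y i ∧ b = ∑ i, v i • y i ∧ ∀ i, u i * a = v i * x := by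
  classical
  set φ : (A × A) →ₗ[A] A := a • LinearMap.fst A A A - x • LinearMap.snd A A A with hφ
  have hexact : Function.Exact (LinearMap.ker φ).subtype φ :=
    LinearMap.exact_subtype_ker_map φ
  have hex2 := Module.Flat.lTensor_exact B hexact
  set θ : B ⊗[A] (A × A) := c ⊗ₜ (1, 0) + b ⊗ₜ (0, 1) with hθ
  have hθ0 : (LinearMap.lTensor B φ) θ = 0 := by
    apply (TensorProduct.rid A B).injective
    simp only [hθ, map_add, LinearMap.lTensor_tmul, map_zero]
    simp only [hφ, LinearMap.sub_apply, LinearMap.smul_apply, LinearMap.fst_apply,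
      LinearMap.snd_apply, TensorProduct.rid_tmul]
    simp only [smul_eq_mul, mul_one, mul_zero, sub_zero, zero_sub, smul_smul]
    rw [← h]
    simp [neg_smul]
  obtain ⟨ξ, hξ⟩ := (hex2 θ).mp hθ0
  obtain ⟨s, hs⟩ := TensorProduct.exists_finset ξ
  refine ⟨{ p // p ∈ s }, inferInstance, fun p => (p : B × LinearMap.ker φ).2.1.1,
    fun p => (p : B × LinearMap.ker φ).2.1.2, fun p => (p : B × LinearMap.ker φ).1, ?_, ?_, ?_⟩
  · -- c = ∑ u i • y i : apply rid ∘ lTensor fst to both sides of hξ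
    have := congrArg (fun z => (TensorProduct.rid A B) ((LinearMap.lTensor B (LinearMap.fst A A A)) z)) hξ
    simp only [hs, map_sum, LinearMap.lTensor_tmul] at this
    simpa [hθ, TensorProduct.rid_tmul, Finset.sum_attach s
      (fun p => (p.2.1.1 : A) • p.1)] using this.symm
  · have := congrArg (fun z => (TensorProduct.rid A B) ((LinearMap.lTensor B (LinearMap.snd A A A)) z)) hξ
    simp only [hs, map_sum, LinearMap.lTensor_tmul] at this
    simpa [hθ, TensorProduct.rid_tmul, Finset.sum_attach s
      (fun p => (p.2.1.2 : A) • p.1)] using this.symm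
  · rintro ⟨⟨b', w⟩, hp⟩
    have hw := w.2
    simp only [LinearMap.mem_ker, hφ, LinearMap.sub_apply, LinearMap.smul_apply,
      LinearMap.fst_apply, LinearMap.snd_apply, smul_eq_mul, sub_eq_zero] at hw
    simpa [mul_comm] using hw

theorem core_local_lemma {A B Q : Type*} [CommRing A] [IsLocalRing A] [CommRing B]
    [Algebra A B] [Module.Flat A B] [Module.Finite A B] [AddCommGroup Q] [Module A Q]
    [Nontrivial Q] (π : B →ₗ[A] Q) (hπ : Function.Surjective π) (h1 : π 1 = 0)
    (x : A) (hx : ∀ b : B, ∃ t : A, x • b = t • (1 : B)) : x = 0 := by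
  classical
  set 𝔪 := IsLocalRing.maximalIdeal A with h𝔪
  set I : Ideal A := LinearMap.ker (LinearMap.toSpanSingleton A A x) with hI
  -- 1 is not in 𝔪 • ⊤ in B
  have h1B : (1 : B) ∉ 𝔪 • (⊤ : Submodule A B) := by
    intro hmem
    have hmul : ∀ (b : B), ∀ z ∈ 𝔪 • (⊤ : Submodule A B), b * z ∈ 𝔪 • (⊤ : Submodule A B) := by
      intro b z hz
      refine Submodule.smul_induction_on hz (fun a ha m _ => ?_) (fun z1 z2 hz1 hz2 => ?_)
      · rw [Algebra.mul_smul_comm]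
        exact Submodule.smul_mem_smul ha trivial
      · rw [mul_add]; exact add_mem hz1 hz2
    have htop : (⊤ : Submodule A B) ≤ 𝔪 • ⊤ := by
      intro b _
      simpa using hmul b 1 hmem
    have hbot : (⊤ : Submodule A B) = ⊥ :=
      Submodule.eq_bot_of_le_smul_of_le_jacobson_bot 𝔪 ⊤ (Module.finite_def.mp ‹_›) htop
        (IsLocalRing.maximalIdeal_le_jacobson ⊥)
    obtain ⟨q, hq⟩ := exists_ne (0 : Q)
    obtain ⟨b, rfl⟩ := hπ q
    have : b = 0 := by
      have : b ∈ (⊥ : Submodule A B) := hbot ▸ Submodule.mem_top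
      simpa using this
    exact hq (by rw [this, map_zero])
  -- main decomposition
  have hdec : ∀ b : B, ∃ t : A, b - t • 1 ∈ I • (⊤ : Submodule A B) := by
    intro b
    obtain ⟨a, ha⟩ := hx b
    obtain ⟨ι, _, u, v, y, hc, hb, huv⟩ := flat_two_term_relation x a b 1 ha
    have hex : ∃ i, u i ∉ 𝔪 := by
      by_contra h'
      push_neg at h'
      apply h1B
      rw [hc]
      exact Submodule.sum_mem _ fun i _ => Submodule.smul_mem_smul (h' i) trivial
    obtain ⟨i, hi⟩ := hex
    have hui : IsUnit (u i) := by
      by_contra h'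
      exact hi ((IsLocalRing.mem_maximalIdeal _).mpr h')
    set t : A := ↑hui.unit⁻¹ * v i with ht
    have hxt : x * t = a := by
      have := huv i
      calc x * t = ↑hui.unit⁻¹ * (v i * x) := by rw [ht]; ring
      _ = ↑hui.unit⁻¹ * (u i * a) := by rw [this]
      _ = (↑hui.unit⁻¹ * u i) * a := by ring
      _ = a := by rw [IsUnit.val_inv_mul, one_mul]
    have hz : x • (b - t • 1) = (0 : A) • (0 : B) := by
      rw [smul_sub, ha, smul_smul, hxt, sub_self, zero_smul]
    obtain ⟨ι', _, u', v', y', _, hb', huv'⟩ := flat_two_term_relation x 0 (b - t • 1) 0 hz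
    refine ⟨t, ?_⟩
    rw [hb']
    refine Submodule.sum_mem _ fun i _ => Submodule.smul_mem_smul ?_ trivial
    have := huv' i
    rw [mul_zero] at this
    show v' i ∈ LinearMap.ker (LinearMap.toSpanSingleton A A x)
    rw [LinearMap.mem_ker, LinearMap.toSpanSingleton_apply, smul_eq_mul]
    exact this.symm
  -- push to Q
  have htopQ : (⊤ : Submodule A Q) ≤ I • ⊤ := by
    intro q _
    obtain ⟨b, rfl⟩ := hπ q
    obtain ⟨t, htb⟩ := hdec b
    have : π b = π (b - t • 1) := by
      rw [map_sub, map_smul, h1, smul_zero, sub_zero]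
    rw [this]
    have : π (b - t • 1) ∈ Submodule.map π (I • ⊤) := Submodule.mem_map_of_mem htb
    rw [Submodule.map_smul''] at this
    exact smul_mono_right I (le_top : Submodule.map π ⊤ ≤ ⊤) this
  -- Nakayama on Q
  by_cases hIt : I = ⊤
  · have : (1 : A) ∈ I := hIt ▸ Submodule.mem_top
    simpa [hI, LinearMap.mem_ker] using this
  · exfalso
    haveI : Module.Finite A Q := Module.Finite.of_surjective π hπ
    have hbot : (⊤ : Submodule A Q) = ⊥ :=
      Submodule.eq_bot_of_le_smul_of_le_jacobson_bot I ⊤ (Module.finite_def.mp ‹_›) htopQ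
        (le_trans (IsLocalRing.le_maximalIdeal hIt) (IsLocalRing.maximalIdeal_le_jacobson ⊥))
    obtain ⟨q, hq⟩ := exists_ne (0 : Q)
    have : q ∈ (⊥ : Submodule A Q) := hbot ▸ Submodule.mem_top
    exact hq (by simpa using this)

/-- For a module-finite flat extension `R ⊂ S`, the conductor localizes to zero at every
prime of the support of `S/R`. -/
theorem conductor_localizes_to_zero
    (R S : Type*) [CommRing R] [CommRing S] [Algebra R S]
    (hinj : Function.Injective (algebraMap R S))
    [Module.Flat R S] [Module.Finite R S]
    (P : Ideal R) [P.IsPrime]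
    (hP : Nontrivial (LocalizedModule P.primeCompl
      (S ⧸ LinearMap.range (Algebra.linearMap R S))))
    (r : R) (hr : ∀ s : S, algebraMap R S r * s ∈ (algebraMap R S).range) :
    algebraMap R (Localization.AtPrime P) r = 0 := by
  classical
  set A := Localization.AtPrime P with hA
  set B := Localization (Algebra.algebraMapSubmonoid S P.primeCompl) with hB
  letI : Algebra A B := localizationAlgebra P.primeCompl S
  haveI : IsScalarTower R A B := IsScalarTower.of_algebraMap_eq'
    (by rw [RingHom.algebraMap_toAlgebra, IsLocalization.map_comp, ← IsScalarTower.algebraMap_eq])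
  haveI : Module.Finite A B := Module.Finite.of_isLocalization R S (Rₚ := A) (Sₚ := B) P.primeCompl
  haveI : Module.Flat A B :=
    Module.Flat.of_isLocalizedModule A P.primeCompl (IsScalarTower.toAlgHom R S B).toLinearMap
  set N₀ := LinearMap.range (Algebra.linearMap R S) with hN₀
  set fB : S →ₗ[R] B := (IsScalarTower.toAlgHom R S B).toLinearMap with hfB
  set fQ := LocalizedModule.mkLinearMap P.primeCompl (S ⧸ N₀) with hfQ
  set π₀ := IsLocalizedModule.map P.primeCompl fB fQ (N₀.mkQ) with hπ₀
  set π := LinearMap.extendScalarsOfIsLocalization P.primeCompl A π₀ with hπdef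
  have hπ : Function.Surjective π := by
    show Function.Surjective π₀
    exact IsLocalizedModule.map_surjective P.primeCompl fB fQ N₀.mkQ
      (Submodule.mkQ_surjective N₀)
  have h1 : π (1 : B) = 0 := by
    show π₀ (1 : B) = 0
    have h1' : (1 : B) = fB 1 := by simp [hfB]
    rw [h1', IsLocalizedModule.map_apply]
    have : N₀.mkQ (1 : S) = 0 := by
      simp only [Submodule.mkQ_apply, Submodule.Quotient.mk_eq_zero]
      exact ⟨1, by simp⟩
    rw [this, map_zero]
  have hx : ∀ b : B, ∃ t : A, (algebraMap R A r) • b = t • (1 : B) := by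
    intro b
    obtain ⟨⟨s, m⟩, hb⟩ := IsLocalization.mk'_surjective (Algebra.algebraMapSubmonoid S P.primeCompl) b
    obtain ⟨w, hw, hwm⟩ := Submonoid.mem_map.mp m.2
    obtain ⟨a₀, ha₀⟩ := hr s
    refine ⟨IsLocalization.mk' A a₀ ⟨w, hw⟩, ?_⟩
    have hu : IsUnit (algebraMap S B (algebraMap R S w)) := by
      have := IsLocalization.map_units B m
      rwa [← hwm] at this
    apply hu.mul_left_cancel
    have hsmul1 : (algebraMap R A r) • b = algebraMap R B r * b := by
      rw [Algebra.smul_def, ← IsScalarTower.algebraMap_apply]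
    have hsmul2 : (IsLocalization.mk' A a₀ ⟨w, hw⟩) • (1 : B) =
        algebraMap A B (IsLocalization.mk' A a₀ ⟨w, hw⟩) := by
      rw [Algebra.smul_def, mul_one]
    rw [hsmul1, hsmul2]
    have hbspec : algebraMap S B (algebraMap R S w) * b = algebraMap S B s := by
      rw [hwm, ← hb]
      exact IsLocalization.mk'_spec' B s m
    calc algebraMap S B (algebraMap R S w) * (algebraMap R B r * b)
        = algebraMap R B r * (algebraMap S B (algebraMap R S w) * b) := by ring
      _ = algebraMap R B r * algebraMap S B s := by rw [hbspec]
      _ = algebraMap S B (algebraMap R S r * s) := by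
          rw [map_mul, IsScalarTower.algebraMap_apply R S B]
      _ = algebraMap S B (algebraMap R S a₀) := by rw [← ha₀]
      _ = algebraMap A B (algebraMap R A a₀) := by
          rw [← IsScalarTower.algebraMap_apply, ← IsScalarTower.algebraMap_apply]
      _ = algebraMap A B (algebraMap R A w * IsLocalization.mk' A a₀ ⟨w, hw⟩) :=
          congrArg _ (IsLocalization.mk'_spec' A a₀ ⟨w, hw⟩).symm
      _ = algebraMap S B (algebraMap R S w) * algebraMap A B (IsLocalization.mk' A a₀ ⟨w, hw⟩) := by
          rw [map_mul, ← IsScalarTower.algebraMap_apply, IsScalarTower.algebraMap_apply R S B]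
  exact core_local_lemma π hπ h1 (algebraMap R A r) hx
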